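/- Two standard tableaux on the same periodic skew diagram λ/μ^ with equal content functions are equal: if T, S ∈ Tab^{RC}(λ/μ^) and C_T = C_S then T = S. -/

import Mathlib

/-- The periodic skew diagram `λ/μ^` attached to `(λ,μ)` (rows are indexed
`1,…,m`, with the `0`-indexed data `lam i = λ_{i+1}`, `mu i = μ_{i+1}`):
`λ/μ^ = ⋃_{k∈ℤ} (λ/μ + k(m,-ℓ))`. -/
def hatD (m ℓ : ℕ) (lam mu : ℕ → ℤ) : Set (ℤ × ℤ) :=
  {p | ∃ (k : ℤ) (i : ℕ), i < m ∧ p.1 = (i : ℤ) + 1 + k * m ∧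
        mu i + 1 ≤ p.2 + k * ℓ ∧ p.2 + k * ℓ ≤ lam i}

/-- `v ∈ P̂⁺_{m,ℓ}`: weakly decreasing with spread at most `ℓ`. -/
def isDom (m ℓ : ℕ) (v : ℕ → ℤ) : Prop :=
  (∀ i j : ℕ, i ≤ j → j < m → v j ≤ v i) ∧ v 0 - v (m - 1) ≤ (ℓ : ℤ)

/-- `(λ,μ) ∈ 𝒥_{m,ℓ}`. -/
def memJ (n m ℓ : ℕ) (lam mu : ℕ → ℤ) : Prop :=
  1 ≤ m ∧ isDom m ℓ lam ∧ isDom m ℓ mu ∧ (∀ i < m, mu i ≤ lam i) ∧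
    (∑ i ∈ Finset.range m, (lam i - mu i)) = (n : ℤ)

/-- `(λ,μ) ∈ 𝒥*_{m,ℓ}` (no empty rows: `λ_i > μ_i`). -/
def memJstar (n m ℓ : ℕ) (lam mu : ℕ → ℤ) : Prop :=
  1 ≤ m ∧ isDom m ℓ lam ∧ isDom m ℓ mu ∧ (∀ i < m, mu i < lam i) ∧
    (∑ i ∈ Finset.range m, (lam i - mu i)) = (n : ℤ)

/-- A tableau on the (`(m,-ℓ)`-periodic) diagram `Λ`: a bijection `Λ → ℤ`
with `T(u + (m,-ℓ)) = T(u) + n`. -/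
def IsTab (n m ℓ : ℕ) (Λ : Set (ℤ × ℤ)) (T : ℤ × ℤ → ℤ) : Prop :=
  Set.BijOn T Λ Set.univ ∧ ∀ u ∈ Λ, T (u + ((m : ℤ), -(ℓ : ℤ))) = T u + (n : ℤ)

/-- Row increasing. -/
def RowInc (Λ : Set (ℤ × ℤ)) (T : ℤ × ℤ → ℤ) : Prop :=
  ∀ a b : ℤ, (a, b) ∈ Λ → (a, b + 1) ∈ Λ → T (a, b) < T (a, b + 1)

/-- Column increasing. -/
def ColInc (Λ : Set (ℤ × ℤ)) (T : ℤ × ℤ → ℤ) : Prop :=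
  ∀ a b : ℤ, (a, b) ∈ Λ → (a + 1, b) ∈ Λ → T (a, b) < T (a + 1, b)

/-- A standard (row-column increasing) tableau. -/
def IsStdTab (n m ℓ : ℕ) (Λ : Set (ℤ × ℤ)) (T : ℤ × ℤ → ℤ) : Prop :=
  IsTab n m ℓ Λ T ∧ RowInc Λ T ∧ ColInc Λ T

/-- `F` is the content function of the tableau `T`: `F(T(a,b)) = b - a`. -/
def IsContent (Λ : Set (ℤ × ℤ)) (T : ℤ × ℤ → ℤ) (F : ℤ → ℤ) : Prop :=
  ∀ u ∈ Λ, F (T u) = u.2 - u.1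


namespace StdContentAux

/-- Extended boundary function: for `a = i + 1 + k*m` (`0 ≤ i < m`), `Lext f a = f i - k*ℓ`. -/
def Lext (m ℓ : ℕ) (f : ℕ → ℤ) (a : ℤ) : ℤ :=
  f ((a - 1) % (m : ℤ)).toNat - ((a - 1) / (m : ℤ)) * ℓ

lemma mem_hatD_iff {m ℓ : ℕ} (hm : 1 ≤ m) (lam mu : ℕ → ℤ) (a b : ℤ) :
    (a, b) ∈ hatD m ℓ lam mu ↔ Lext m ℓ mu a < b ∧ b ≤ Lext m ℓ lam a := by
  have hm0 : (0 : ℤ) < (m : ℤ) := by exact_mod_cast hm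
  constructor
  · rintro ⟨k, i, him, h1, h2, h3⟩
    simp only at h1 h2 h3
    have ha : a - 1 = (i : ℤ) + (m : ℤ) * k := by push_cast at h1 ⊢; linarith
    have himz : (i : ℤ) < (m : ℤ) := by exact_mod_cast him
    have hmod : (a - 1) % (m : ℤ) = (i : ℤ) := by
      rw [ha, Int.add_mul_emod_self_left,
        Int.emod_eq_of_lt (by positivity) himz]
    have hdiv : (a - 1) / (m : ℤ) = k := by
      rw [ha, Int.add_mul_ediv_left _ _ (ne_of_gt hm0),
        Int.ediv_eq_zero_of_lt (by positivity) himz, zero_add]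
    unfold Lext
    rw [hmod, hdiv, Int.toNat_natCast]
    constructor <;> linarith
  · rintro ⟨h1, h2⟩
    unfold Lext at h1 h2
    set r := (a - 1) % (m : ℤ) with hr
    set q := (a - 1) / (m : ℤ) with hq
    have hr0 : 0 ≤ r := Int.emod_nonneg _ (ne_of_gt hm0)
    have hrm : r < (m : ℤ) := Int.emod_lt_of_pos _ hm0
    have hdm : (m : ℤ) * q + r = a - 1 := Int.mul_ediv_add_emod _ _
    have hrt : ((r.toNat : ℤ)) = r := Int.toNat_of_nonneg hr0
    refine ⟨q, r.toNat, ?_, ?_, ?_, ?_⟩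
    · omega
    · simp only; rw [hrt]; linarith
    · simp only; linarith
    · simp only; linarith

lemma Lext_succ_le {m ℓ : ℕ} (hm : 1 ≤ m) {f : ℕ → ℤ} (hf : isDom m ℓ f) (a : ℤ) :
    Lext m ℓ f (a + 1) ≤ Lext m ℓ f a := by
  have hm0 : (0 : ℤ) < (m : ℤ) := by exact_mod_cast hm
  set r := (a - 1) % (m : ℤ) with hr
  set q := (a - 1) / (m : ℤ) with hq
  have hr0 : 0 ≤ r := Int.emod_nonneg _ (ne_of_gt hm0)
  have hrm : r < (m : ℤ) := Int.emod_lt_of_pos _ hm0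
  have hdm : (m : ℤ) * q + r = a - 1 := Int.mul_ediv_add_emod _ _
  have ha1 : a + 1 - 1 = a := by ring
  by_cases hcase : r + 1 < (m : ℤ)
  · have haeq : a = (r + 1) + (m : ℤ) * q := by linarith
    have h1 : a % (m : ℤ) = r + 1 := by
      rw [haeq, Int.add_mul_emod_self_left, Int.emod_eq_of_lt (by linarith) hcase]
    have h2 : a / (m : ℤ) = q := by
      rw [haeq, Int.add_mul_ediv_left _ _ (ne_of_gt hm0),
        Int.ediv_eq_zero_of_lt (by linarith) hcase, zero_add]
    unfold Lext
    rw [ha1, h1, h2]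
    have hstep : f (r + 1).toNat ≤ f r.toNat := by
      apply hf.1
      · omega
      · omega
    linarith
  · have haeq : a = (m : ℤ) * (q + 1) := by linarith
    have h1 : a % (m : ℤ) = 0 := by rw [haeq]; exact Int.mul_emod_right _ _
    have h2 : a / (m : ℤ) = q + 1 := by
      rw [haeq]; exact Int.mul_ediv_cancel_left _ (ne_of_gt hm0)
    unfold Lext
    rw [ha1, h1, h2]
    have hrt : r.toNat = m - 1 := by omega
    have hspread : f 0 - f (m - 1) ≤ (ℓ : ℤ) := hf.2
    rw [hrt]
    simp only [Int.toNat_zero]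
    have : (0 : ℤ) ≤ (ℓ : ℤ) ∨ True := Or.inr trivial
    linarith

lemma Lext_antitone {m ℓ : ℕ} (hm : 1 ≤ m) {f : ℕ → ℤ} (hf : isDom m ℓ f)
    {a b : ℤ} (hab : a ≤ b) : Lext m ℓ f b ≤ Lext m ℓ f a := by
  refine Int.le_induction (motive := fun b _ => Lext m ℓ f b ≤ Lext m ℓ f a)
    (le_refl _) (fun c _ ih => ?_) b hab
  exact le_trans (Lext_succ_le hm hf c) ih

lemma diag_mem {m ℓ : ℕ} (hm : 1 ≤ m) {lam mu : ℕ → ℤ}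
    (hlam : isDom m ℓ lam) (hmu : isDom m ℓ mu) {a b s t : ℤ}
    (hs0 : 0 ≤ s) (hst : s ≤ t)
    (h0 : (a, b) ∈ hatD m ℓ lam mu) (ht : (a + t, b + t) ∈ hatD m ℓ lam mu) :
    (a + s, b + s) ∈ hatD m ℓ lam mu := by
  rw [mem_hatD_iff hm] at h0 ht ⊢
  constructor
  · have := Lext_antitone hm hmu (show a + s ≥ a by linarith).le
    have h0l := h0.1
    have : Lext m ℓ mu (a + s) ≤ Lext m ℓ mu a :=
      Lext_antitone hm hmu (by linarith)
    linarith
  · have h1 : Lext m ℓ lam (a + t) ≤ Lext m ℓ lam (a + s) :=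
      Lext_antitone hm hlam (by linarith)
    have h2 := ht.2
    linarith

lemma step_mem {m ℓ : ℕ} (hm : 1 ≤ m) {lam mu : ℕ → ℤ}
    (hlam : isDom m ℓ lam) (hmu : isDom m ℓ mu) {a b : ℤ}
    (h1 : (a, b) ∈ hatD m ℓ lam mu) (h2 : (a + 1, b + 1) ∈ hatD m ℓ lam mu) :
    (a + 1, b) ∈ hatD m ℓ lam mu := by
  rw [mem_hatD_iff hm] at h1 h2 ⊢
  constructor
  · have : Lext m ℓ mu (a + 1) ≤ Lext m ℓ mu a := Lext_antitone hm hmu (by linarith)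
    linarith [h1.1]
  · linarith [h2.2]

/-- Strict increase along a diagonal. -/
lemma diag_strictMono {n m ℓ : ℕ} (hm : 1 ≤ m) {lam mu : ℕ → ℤ}
    (hlam : isDom m ℓ lam) (hmu : isDom m ℓ mu) {T : ℤ × ℤ → ℤ}
    (hT : IsStdTab n m ℓ (hatD m ℓ lam mu) T) {a b : ℤ}
    (h0 : (a, b) ∈ hatD m ℓ lam mu) :
    ∀ t, 1 ≤ t → (a + t, b + t) ∈ hatD m ℓ lam mu → T (a, b) < T (a + t, b + t) := by
  have key : ∀ c d : ℤ, (c, d) ∈ hatD m ℓ lam mu → (c + 1, d + 1) ∈ hatD m ℓ lam mu →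
      T (c, d) < T (c + 1, d + 1) := by
    intro c d hc hc1
    have hmid : (c + 1, d) ∈ hatD m ℓ lam mu := step_mem hm hlam hmu hc hc1
    exact lt_trans (hT.2.2 c d hc hmid) (hT.2.1 (c + 1) d hmid hc1)
  intro t ht
  refine Int.le_induction
    (motive := fun t _ => (a + t, b + t) ∈ hatD m ℓ lam mu → T (a, b) < T (a + t, b + t))
    ?_ (fun s hs ih hmem => ?_) t ht
  · intro h1; exact key a b h0 h1
  · have hsm : (a + s, b + s) ∈ hatD m ℓ lam mu := by
      have := diag_mem hm hlam hmu (show (0:ℤ) ≤ s by linarith)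
        (show s ≤ s + 1 by linarith) h0 (by convert hmem using 2)
      exact this
    have h1 : T (a, b) < T (a + s, b + s) := ih hsm
    have h2 : T (a + s, b + s) < T (a + s + 1, b + s + 1) := by
      apply key _ _ hsm
      convert hmem using 2 <;> ring
    have heq : (a + s + 1, b + s + 1) = (a + (s + 1), b + (s + 1)) := by
      simp [add_assoc]
    rw [heq] at h2
    exact lt_trans h1 h2

/-- A strictly monotone function on a finset of `ℤ` is determined by its image. -/
lemma eq_of_strictMonoOn_image (s : Finset ℤ) :
    ∀ f g : ℤ → ℤ,
      (∀ x ∈ s, ∀ y ∈ s, x < y → f x < f y) →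
      (∀ x ∈ s, ∀ y ∈ s, x < y → g x < g y) →
      s.image f = s.image g → ∀ x ∈ s, f x = g x := by
  induction s using Finset.induction_on_min with
  | empty => intro f g _ _ _ x hx; simp at hx
  | insert a s ha ih =>
    intro f g hf hg him x hx
    have haI : a ∈ insert a s := Finset.mem_insert_self a s
    have hfmin : ∀ y ∈ (insert a s).image f, f a ≤ y := by
      intro y hy
      obtain ⟨z, hz, rfl⟩ := Finset.mem_image.1 hy
      rcases Finset.mem_insert.1 hz with rfl | hz
      · exact le_refl _
      · exact le_of_lt (hf a haI z (Finset.mem_insert_of_mem hz) (ha z hz))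
    have hgmin : ∀ y ∈ (insert a s).image g, g a ≤ y := by
      intro y hy
      obtain ⟨z, hz, rfl⟩ := Finset.mem_image.1 hy
      rcases Finset.mem_insert.1 hz with rfl | hz
      · exact le_refl _
      · exact le_of_lt (hg a haI z (Finset.mem_insert_of_mem hz) (ha z hz))
    have hga_mem : g a ∈ (insert a s).image f := by
      rw [him]; exact Finset.mem_image_of_mem g haI
    have hfa_mem : f a ∈ (insert a s).image g := by
      rw [← him]; exact Finset.mem_image_of_mem f haI
    have hfga : f a = g a := le_antisymm (hfmin _ hga_mem) (hgmin _ hfa_mem)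
    rcases Finset.mem_insert.1 hx with rfl | hx
    · exact hfga
    · -- strip the inserted element from the images
      have hfnot : f a ∉ s.image f := by
        intro hmem
        obtain ⟨z, hz, hzz⟩ := Finset.mem_image.1 hmem
        have := hf a haI z (Finset.mem_insert_of_mem hz) (ha z hz)
        omega
      have hgnot : g a ∉ s.image g := by
        intro hmem
        obtain ⟨z, hz, hzz⟩ := Finset.mem_image.1 hmem
        have := hg a haI z (Finset.mem_insert_of_mem hz) (ha z hz)
        omega
      have him' : s.image f = s.image g := by
        have h1 : ((insert a s).image f).erase (f a) = s.image f := by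
          rw [Finset.image_insert, Finset.erase_insert hfnot]
        have h2 : ((insert a s).image g).erase (g a) = s.image g := by
          rw [Finset.image_insert, Finset.erase_insert hgnot]
        rw [← h1, ← h2, him, hfga]
      exact ih f g
        (fun x hx y hy hxy => hf x (Finset.mem_insert_of_mem hx) y (Finset.mem_insert_of_mem hy) hxy)
        (fun x hx y hy hxy => hg x (Finset.mem_insert_of_mem hx) y (Finset.mem_insert_of_mem hy) hxy)
        him' x hx

open Classical in
/-- The image of the diagonal through `(a,b)` under a standard tableau is
exactly the `F`-fiber of the content `b - a`. -/
lemma diag_image {n m ℓ : ℕ} (hm : 1 ≤ m) {lam mu : ℕ → ℤ}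
    (hlam : isDom m ℓ lam) (hmu : isDom m ℓ mu) {T : ℤ × ℤ → ℤ} {F : ℤ → ℤ}
    (hT : IsStdTab n m ℓ (hatD m ℓ lam mu) T)
    (hFT : IsContent (hatD m ℓ lam mu) T F) {a b : ℤ}
    (hab : (a, b) ∈ hatD m ℓ lam mu) (i : ℤ) :
    i ∈ ((Finset.Ioc (Lext m ℓ mu a - b) (Lext m ℓ lam a - b)).filter
        (fun t => (a + t, b + t) ∈ hatD m ℓ lam mu)).image
        (fun t => T (a + t, b + t)) ↔ F i = b - a := by
  have hbd := (mem_hatD_iff hm lam mu a b).1 hab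
  constructor
  · intro hi
    obtain ⟨t, htmem, rfl⟩ := Finset.mem_image.1 hi
    have htΛ : (a + t, b + t) ∈ hatD m ℓ lam mu := (Finset.mem_filter.1 htmem).2
    have := hFT (a + t, b + t) htΛ
    simp only at this
    rw [this]; ring
  · intro hFi
    obtain ⟨v, hvΛ, hvT⟩ := hT.1.1.2.2 (Set.mem_univ i)
    have hvc : F i = v.2 - v.1 := by rw [← hvT]; exact hFT v hvΛ
    set t := v.1 - a with htdef
    have hv : v = (a + t, b + t) := by
      have h2 : v.2 = b + t := by
        have : v.2 - v.1 = b - a := by rw [← hvc, hFi]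
        omega
      have h1 : v.1 = a + t := by omega
      exact Prod.ext h1 h2
    rw [hv] at hvΛ
    have hvbd := (mem_hatD_iff hm lam mu (a + t) (b + t)).1 hvΛ
    have htmem : t ∈ Finset.Ioc (Lext m ℓ mu a - b) (Lext m ℓ lam a - b) := by
      rw [Finset.mem_Ioc]
      rcases le_or_gt 0 t with h | h
      · have : Lext m ℓ lam (a + t) ≤ Lext m ℓ lam a :=
          Lext_antitone hm hlam (by linarith)
        constructor
        · linarith [hbd.1]
        · linarith [hvbd.2]
      · have : Lext m ℓ mu a ≤ Lext m ℓ mu (a + t) :=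
          Lext_antitone hm hmu (by linarith)
        constructor
        · linarith [hvbd.1]
        · linarith [hbd.2]
    refine Finset.mem_image.2 ⟨t, Finset.mem_filter.2 ⟨htmem, hvΛ⟩, ?_⟩
    rw [← hv, hvT]

end StdContentAux

/-- two standard tableaux on `λ/μ^` with the same content
function are equal (on the diagram). -/
theorem std_content_inj (n m ℓ : ℕ) (hn : 2 ≤ n) (lam mu : ℕ → ℤ)
    (hJ : memJ n m ℓ lam mu)
    (T S : ℤ × ℤ → ℤ) (hT : IsStdTab n m ℓ (hatD m ℓ lam mu) T)
    (hS : IsStdTab n m ℓ (hatD m ℓ lam mu) S)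
    (F : ℤ → ℤ) (hFT : IsContent (hatD m ℓ lam mu) T F)
    (hFS : IsContent (hatD m ℓ lam mu) S F) :
    Set.EqOn T S (hatD m ℓ lam mu) := by
  classical
  obtain ⟨hm, hlam, hmu, -, -⟩ := hJ
  rintro ⟨a, b⟩ hab
  open StdContentAux in
  have hbd := (StdContentAux.mem_hatD_iff hm lam mu a b).1 hab
  set D := (Finset.Ioc (StdContentAux.Lext m ℓ mu a - b)
      (StdContentAux.Lext m ℓ lam a - b)).filter
      (fun t => (a + t, b + t) ∈ hatD m ℓ lam mu) with hD
  set f : ℤ → ℤ := fun t => T (a + t, b + t) with hf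
  set g : ℤ → ℤ := fun t => S (a + t, b + t) with hg
  have hmono : ∀ (R : ℤ × ℤ → ℤ), IsStdTab n m ℓ (hatD m ℓ lam mu) R →
      ∀ x ∈ D, ∀ y ∈ D, x < y → R (a + x, b + x) < R (a + y, b + y) := by
    intro R hR x hx y hy hxy
    have hxΛ : (a + x, b + x) ∈ hatD m ℓ lam mu := (Finset.mem_filter.1 hx).2
    have hyΛ : (a + y, b + y) ∈ hatD m ℓ lam mu := (Finset.mem_filter.1 hy).2
    have := StdContentAux.diag_strictMono hm hlam hmu hR hxΛ (y - x) (by linarith)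
      (by convert hyΛ using 2 <;> ring)
    convert this using 2 <;> ring
  have him : D.image f = D.image g := by
    ext i
    rw [show D.image f = _ from rfl]
    constructor
    · intro hi
      have h1 := (StdContentAux.diag_image hm hlam hmu hT hFT hab i).1 hi
      exact (StdContentAux.diag_image hm hlam hmu hS hFS hab i).2 h1
    · intro hi
      have h1 := (StdContentAux.diag_image hm hlam hmu hS hFS hab i).1 hi
      exact (StdContentAux.diag_image hm hlam hmu hT hFT hab i).2 h1
  have h0D : (0 : ℤ) ∈ D := by
    refine Finset.mem_filter.2 ⟨?_, by simpa using hab⟩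
    rw [Finset.mem_Ioc]
    constructor <;> linarith [hbd.1, hbd.2]
  have := StdContentAux.eq_of_strictMonoOn_image D f g (hmono T hT) (hmono S hS) him 0 h0D
  simpa [hf, hg] using this
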